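/- arXiv:1011.6640 — 2 statements merged into one kernel-verified Lean document; each statement's English description precedes it below -/
import Mathlib

section
/- For any $\lambda > 0$ and any integer $n \geq 4\lambda^{-2}+1$, $P\{\chi^2_{n+1} < (n+1)(1-\lambda)\} \leq P\{\chi^2_n \leq n(1-\lambda)\}$. -/
open MeasureTheory ProbabilityTheory Real Set

/-- Key scalar inequality: `(1-λ)(1+λ²/2) ≤ exp(-λ)` for `0 < λ ≤ 1`. -/
lemma aux_exp_ineq {lam : ℝ} (h0 : 0 < lam) (h1 : lam ≤ 1) :
    (1 - lam) * (1 + lam ^ 2 / 2) ≤ Real.exp (-lam) := by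
  have habs : |(-lam)| ≤ 1 := by rw [abs_neg, abs_of_pos h0]; exact h1
  have hb := Real.exp_bound habs (n := 4) (by norm_num)
  have hsum : ∑ m ∈ Finset.range 4, (-lam) ^ m / (Nat.factorial m) =
      1 - lam + lam ^ 2 / 2 - lam ^ 3 / 6 := by
    simp [Finset.sum_range_succ, Nat.factorial]
    ring
  rw [hsum] at hb
  have habs4 : |(-lam)| ^ 4 = lam ^ 4 := by rw [abs_neg, abs_of_pos h0]
  rw [habs4] at hb
  have hb' := abs_le.mp hb
  have h2 : 1 - lam + lam ^ 2 / 2 - lam ^ 3 / 6 - lam ^ 4 * ((4 + 1) / (Nat.factorial 4 * 4)) ≤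
      Real.exp (-lam) := by linarith [hb'.1]
  have hfac : ((Nat.factorial 4 : ℝ)) = 24 := by norm_num [Nat.factorial]
  rw [hfac] at h2
  nlinarith [pow_pos h0 3, pow_pos h0 4, sq_nonneg lam]

/-- Gamma ratio lower bound from log-convexity:
`x·Γ(x) ≤ Γ(x+1/2)·√(x+1/2)`. -/
lemma aux_gamma_ratio {x : ℝ} (hx : 0 < x) :
    x * Real.Gamma x ≤ Real.Gamma (x + 1/2) * Real.sqrt (x + 1/2) := by
  have h12 : (0:ℝ) < x + 1/2 := by linarith
  have h32 : (0:ℝ) < x + 3/2 := by linarith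
  have hG12 : 0 < Real.Gamma (x + 1/2) := Real.Gamma_pos_of_pos h12
  have hG32 : 0 < Real.Gamma (x + 3/2) := Real.Gamma_pos_of_pos h32
  have hconv := Real.convexOn_log_Gamma.2 (mem_Ioi.mpr h12) (mem_Ioi.mpr h32)
    (by norm_num : (0:ℝ) ≤ 1/2) (by norm_num : (0:ℝ) ≤ 1/2) (by norm_num)
  have hmid : (1/2 : ℝ) • (x + 1/2) + (1/2 : ℝ) • (x + 3/2) = x + 1 := by
    simp [smul_eq_mul]; ring
  rw [hmid] at hconv
  simp only [Function.comp_apply, smul_eq_mul] at hconv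
  -- exponentiate
  have hG1 : Real.Gamma (x + 1) = x * Real.Gamma x := Real.Gamma_add_one (ne_of_gt hx)
  have hG32' : Real.Gamma (x + 3/2) = (x + 1/2) * Real.Gamma (x + 1/2) := by
    have : x + 3/2 = (x + 1/2) + 1 := by ring
    rw [this, Real.Gamma_add_one (ne_of_gt h12)]
  have hkey : x * Real.Gamma x ≤
      Real.exp (1/2 * Real.log (Real.Gamma (x + 1/2)) + 1/2 * Real.log (Real.Gamma (x + 3/2))) := by
    calc x * Real.Gamma x = Real.exp (Real.log (Real.Gamma (x + 1))) := by
          rw [Real.exp_log (by rw [hG1]; positivity), hG1]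
      _ ≤ _ := Real.exp_le_exp.mpr hconv
  have hexp : Real.exp (1/2 * Real.log (Real.Gamma (x + 1/2)) +
      1/2 * Real.log (Real.Gamma (x + 3/2))) = Real.Gamma (x + 1/2) * Real.sqrt (x + 1/2) := by
    rw [Real.exp_add]
    have e1 : Real.exp (1/2 * Real.log (Real.Gamma (x + 1/2))) = Real.Gamma (x + 1/2) ^ (1/2 : ℝ) := by
      rw [Real.rpow_def_of_pos hG12]; ring_nf
    have e2 : Real.exp (1/2 * Real.log (Real.Gamma (x + 3/2))) = Real.Gamma (x + 3/2) ^ (1/2 : ℝ) := by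
      rw [Real.rpow_def_of_pos hG32]; ring_nf
    rw [e1, e2, hG32', Real.mul_rpow (le_of_lt h12) (le_of_lt hG12)]
    simp only [← Real.sqrt_eq_rpow]
    rw [mul_comm (Real.sqrt (x+1/2)), ← mul_assoc, Real.mul_self_sqrt (le_of_lt hG12)]
  rw [hexp] at hkey
  exact hkey

set_option maxHeartbeats 1000000 in
lemma aux_pdf_ineq {N lam y : ℝ} (hN : 2 ≤ N) (h0 : 0 < lam) (h1 : lam < 1)
    (hnl : 4 ≤ lam ^ 2 * (N - 1)) (hy : 0 < y) (hyc : y ≤ N * (1 - lam)) :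
    ((N + 1) / N) * gammaPDFReal ((N + 1) / 2) (1 / 2) (((N + 1) / N) * y) ≤
      gammaPDFReal (N / 2) (1 / 2) y := by
  have hNpos : (0:ℝ) < N := by linarith
  set k : ℝ := (N + 1) / N with hk
  have hkpos : 0 < k := by positivity
  have hky : 0 < k * y := by positivity
  have hl1 : (0:ℝ) < 1 - lam := by linarith
  set c0 : ℝ := N * (1 - lam) with hc0
  have hc0pos : 0 < c0 := by positivity
  have hc0N : c0 ≤ N := by rw [hc0]; nlinarith
  set a0 : ℝ := N / 2 with ha0
  set a1 : ℝ := (N + 1) / 2 with ha1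
  have ha0pos : 0 < a0 := by positivity
  have ha1pos : 0 < a1 := by positivity
  have hG0 : 0 < Real.Gamma a0 := Real.Gamma_pos_of_pos ha0pos
  have hG1 : 0 < Real.Gamma a1 := Real.Gamma_pos_of_pos ha1pos
  rw [gammaPDFReal, gammaPDFReal, if_pos hky.le, if_pos hy.le]
  -- decompositions
  have d1 : ((1:ℝ)/2) ^ a1 = ((1:ℝ)/2) ^ a0 * ((1:ℝ)/2) ^ ((1:ℝ)/2) := by
    rw [← Real.rpow_add (by norm_num : (0:ℝ) < 1/2)]
    congr 1
    rw [ha1, ha0]; ring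
  have d2 : (k * y) ^ (a1 - 1) = k ^ (a1 - 1) * (y ^ (a0 - 1) * Real.sqrt y) := by
    rw [Real.mul_rpow hkpos.le hy.le]
    congr 1
    rw [show a1 - 1 = (a0 - 1) + 1/2 by rw [ha1, ha0]; ring,
      Real.rpow_add hy, Real.sqrt_eq_rpow]
  have d3 : Real.exp (-(1/2 * (k * y))) = Real.exp (-(1/2 * y)) * Real.exp (-(y / (2 * N))) := by
    rw [← Real.exp_add]
    congr 1
    rw [hk]; field_simp; ring
  -- step (i)
  have step1 : Real.sqrt y * Real.exp (-(y / (2 * N))) ≤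
      Real.sqrt c0 * Real.exp (-((1 - lam) / 2)) := by
    have h2 : y ≤ c0 * Real.exp ((y - c0) / N) := by
      have he : (y - c0) / N + 1 ≤ Real.exp ((y - c0) / N) := Real.add_one_le_exp _
      have hdiff : c0 * ((y - c0) / N + 1) - y = (c0 - y) * (N - c0) / N := by
        field_simp; ring
      have hnum : 0 ≤ (c0 - y) * (N - c0) / N :=
        div_nonneg (mul_nonneg (by linarith) (by linarith)) hNpos.le
      have hq : y ≤ c0 * ((y - c0) / N + 1) := by linarith
      calc y ≤ c0 * ((y - c0) / N + 1) := hq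
        _ ≤ c0 * Real.exp ((y - c0) / N) := by
            exact mul_le_mul_of_nonneg_left he hc0pos.le
    have hs1 : Real.sqrt y ≤ Real.sqrt c0 * Real.exp ((y - c0) / (2 * N)) := by
      calc Real.sqrt y ≤ Real.sqrt (c0 * Real.exp ((y - c0) / N)) := Real.sqrt_le_sqrt h2
        _ = Real.sqrt c0 * Real.sqrt (Real.exp ((y - c0) / N)) := Real.sqrt_mul hc0pos.le _
        _ = Real.sqrt c0 * Real.exp ((y - c0) / (2 * N)) := by
            congr 1
            rw [show (y - c0) / N = (y - c0) / (2 * N) + (y - c0) / (2 * N) by ring,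
              Real.exp_add]
            exact Real.sqrt_mul_self (Real.exp_pos _).le
    calc Real.sqrt y * Real.exp (-(y / (2 * N)))
        ≤ (Real.sqrt c0 * Real.exp ((y - c0) / (2 * N))) * Real.exp (-(y / (2 * N))) :=
          mul_le_mul_of_nonneg_right hs1 (Real.exp_pos _).le
      _ = Real.sqrt c0 * Real.exp (-((1 - lam) / 2)) := by
          rw [mul_assoc, ← Real.exp_add]
          congr 2
          rw [hc0]; field_simp; ring
  -- step (iii)
  have hkk : k * k ^ (a1 - 1) = k ^ a1 := by
    nth_rewrite 1 [← Real.rpow_one k]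
    rw [← Real.rpow_add hkpos]
    norm_num
  have hkr : k ^ a1 ≤ Real.exp (a1 / N) := by
    have hk1 : k ≤ Real.exp (1 / N) := by
      have hkeq : k = 1 / N + 1 := by rw [hk]; field_simp; ring
      rw [hkeq]
      exact Real.add_one_le_exp _
    calc k ^ a1 ≤ (Real.exp (1 / N)) ^ a1 := Real.rpow_le_rpow hkpos.le hk1 ha1pos.le
      _ = Real.exp (1 / N * a1) := (Real.exp_mul _ _).symm
      _ = Real.exp (a1 / N) := by congr 1; ring
  -- step (ii)
  have hGam : a0 * Real.Gamma a0 ≤ Real.Gamma a1 * Real.sqrt a1 := by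
    have := aux_gamma_ratio ha0pos
    rwa [show a0 + 1/2 = a1 by rw [ha0, ha1]; ring] at this
  have hGam' : Real.Gamma a0 ≤ Real.Gamma a1 * Real.sqrt a1 * (2 / N) := by
    rw [show Real.Gamma a1 * Real.sqrt a1 * (2 / N)
        = (Real.Gamma a1 * Real.sqrt a1) / a0 by rw [ha0]; field_simp]
    rw [le_div_iff₀ ha0pos]
    linarith [hGam]
  -- final scalar bound :  sqrt a1 * (2/N) * sqrt(1/2) * sqrt c0 * exp(a1/N - (1-lam)/2) ≤ 1
  have hfinal : Real.sqrt a1 * (2 / N) * (Real.sqrt (1/2) * Real.sqrt c0)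
      * Real.exp (a1 / N + -((1 - lam) / 2)) ≤ 1 := by
    set e : ℝ := lam / 2 + 1 / (2 * N) with he
    have hee : a1 / N + -((1 - lam) / 2) = e := by rw [he, ha1]; field_simp; ring
    rw [hee]
    set X : ℝ := (N + 1) * (1 - lam) / N with hX
    have hXpos : 0 < X := by positivity
    have hsq : Real.sqrt a1 * (Real.sqrt (1/2) * Real.sqrt c0) = (N / 2) * Real.sqrt X := by
      rw [← Real.sqrt_mul (by norm_num : (0:ℝ) ≤ 1/2), ← Real.sqrt_mul ha1pos.le]
      rw [show a1 * (1 / 2 * c0) = (N / 2) ^ 2 * X by rw [ha1, hc0, hX]; field_simp]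
      rw [Real.sqrt_mul (sq_nonneg _), Real.sqrt_sq (by positivity : (0:ℝ) ≤ N / 2)]
    have hXle : X ≤ Real.exp (-e) ^ 2 := by
      have hexp2 : Real.exp (-e) ^ 2 = Real.exp (-lam) * Real.exp (-(1 / N)) := by
        rw [sq, ← Real.exp_add, ← Real.exp_add]
        congr 1
        rw [he]; field_simp; ring
      rw [hexp2]
      have e1 := aux_exp_ineq h0 h1.le
      have e2 : 1 - 1 / N ≤ Real.exp (-(1 / N)) := by
        have := Real.add_one_le_exp (-(1 / N)); linarith
      have hB : (0:ℝ) ≤ 1 - 1 / N := by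
        rw [sub_nonneg, div_le_one hNpos]; linarith
      have hA : (0:ℝ) ≤ (1 - lam) * (1 + lam ^ 2 / 2) := by nlinarith
      have hprod : (1 - lam) * (1 + lam ^ 2 / 2) * (1 - 1 / N)
          ≤ Real.exp (-lam) * Real.exp (-(1 / N)) :=
        mul_le_mul e1 e2 hB (Real.exp_pos _).le
      have hpoly : X ≤ (1 - lam) * (1 + lam ^ 2 / 2) * (1 - 1 / N) := by
        rw [hX, div_le_iff₀ hNpos]
        have key : (1 - lam) * (1 + lam ^ 2 / 2) * (1 - 1 / N) * N
            = (1 - lam) * (1 + lam ^ 2 / 2) * (N - 1) := by field_simp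
        rw [key]
        nlinarith [mul_nonneg hl1.le (by nlinarith : (0:ℝ) ≤ lam ^ 2 * (N - 1) / 2 - 2)]
      linarith
    have hsX : Real.sqrt X ≤ Real.exp (-e) := by
      calc Real.sqrt X ≤ Real.sqrt (Real.exp (-e) ^ 2) := Real.sqrt_le_sqrt hXle
        _ = Real.exp (-e) := Real.sqrt_sq (Real.exp_pos _).le
    calc Real.sqrt a1 * (2 / N) * (Real.sqrt (1/2) * Real.sqrt c0) * Real.exp e
        = (Real.sqrt a1 * (Real.sqrt (1/2) * Real.sqrt c0)) * (2 / N) * Real.exp e := by ring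
      _ = Real.sqrt X * Real.exp e := by
          rw [hsq]; field_simp
      _ ≤ Real.exp (-e) * Real.exp e := mul_le_mul_of_nonneg_right hsX (Real.exp_pos _).le
      _ = 1 := by rw [← Real.exp_add]; simp
  -- the bracket inequality
  have hQ : Real.Gamma a0 * (k ^ a1 * (((1:ℝ)/2) ^ ((1:ℝ)/2)
      * (Real.sqrt y * Real.exp (-(y / (2 * N)))))) ≤ Real.Gamma a1 := by
    have hhalf : ((1:ℝ)/2) ^ ((1:ℝ)/2) = Real.sqrt (1/2) := (Real.sqrt_eq_rpow _).symm
    rw [hhalf]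
    calc Real.Gamma a0 * (k ^ a1 * (Real.sqrt (1/2) * (Real.sqrt y * Real.exp (-(y / (2 * N))))))
        ≤ (Real.Gamma a1 * Real.sqrt a1 * (2 / N)) * (Real.exp (a1 / N)
            * (Real.sqrt (1/2) * (Real.sqrt c0 * Real.exp (-((1 - lam) / 2))))) := by
          apply mul_le_mul hGam'
          · apply mul_le_mul hkr
            · apply mul_le_mul_of_nonneg_left step1 (Real.sqrt_nonneg _)
            · positivity
            · positivity
          · positivity
          · positivity
      _ = Real.Gamma a1 * (Real.sqrt a1 * (2 / N) * (Real.sqrt (1/2) * Real.sqrt c0)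
            * Real.exp (a1 / N + -((1 - lam) / 2))) := by
          rw [Real.exp_add]; ring
      _ ≤ Real.Gamma a1 * 1 := mul_le_mul_of_nonneg_left hfinal hG1.le
      _ = Real.Gamma a1 := mul_one _
  -- assemble
  have lhs_eq : k * ((1/2:ℝ) ^ a1 / Real.Gamma a1 * (k * y) ^ (a1 - 1)
        * Real.exp (-(1/2 * (k * y))))
      = ((1/2:ℝ) ^ a0 * y ^ (a0 - 1) * Real.exp (-(1/2 * y)))
        * ((Real.Gamma a0 * (k ^ a1 * (((1:ℝ)/2) ^ ((1:ℝ)/2)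
            * (Real.sqrt y * Real.exp (-(y / (2 * N)))))))
          / (Real.Gamma a0 * Real.Gamma a1)) := by
    rw [d1, d2, d3, ← hkk]
    field_simp
  have rhs_eq : (1/2:ℝ) ^ a0 / Real.Gamma a0 * y ^ (a0 - 1) * Real.exp (-(1/2 * y))
      = ((1/2:ℝ) ^ a0 * y ^ (a0 - 1) * Real.exp (-(1/2 * y)))
        * (Real.Gamma a1 / (Real.Gamma a0 * Real.Gamma a1)) := by
    field_simp
  rw [lhs_eq, rhs_eq]
  apply mul_le_mul_of_nonneg_left _ (by positivity)
  apply div_le_div_of_nonneg_right hQ (by positivity)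

/-- The chi-square distribution with `n` degrees of freedom. -/
noncomputable def chiSqMeasure (n : ℕ) : MeasureTheory.Measure ℝ :=
  ProbabilityTheory.gammaMeasure (n / 2 : ℝ) (1 / 2 : ℝ)

theorem chiSq_left_tail_mono (lam : ℝ) (hlam : 0 < lam)
    (n : ℕ) (hn : (4 / lam ^ 2 + 1 : ℝ) ≤ n) :
    chiSqMeasure (n + 1) {x : ℝ | x < (n + 1) * (1 - lam)} ≤
      chiSqMeasure n {x : ℝ | x ≤ n * (1 - lam)} := by
  set N : ℝ := (n : ℝ) with hNdef
  have hcast : ((n + 1 : ℕ) : ℝ) = N + 1 := by push_cast; ring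
  have hlhs : chiSqMeasure (n + 1) {x : ℝ | x < (N + 1) * (1 - lam)}
      = ∫⁻ x in Iio ((N + 1) * (1 - lam)), gammaPDF ((N + 1) / 2) (1 / 2) x := by
    rw [chiSqMeasure, hcast, gammaMeasure,
      show {x : ℝ | x < (N + 1) * (1 - lam)} = Iio ((N + 1) * (1 - lam)) from rfl,
      withDensity_apply _ (measurableSet_Iio : MeasurableSet (Iio ((N + 1) * (1 - lam))))]
  rcases le_or_gt 1 lam with hl | hl
  · -- trivial case : the left set has measure zero
    have hc : (N + 1) * (1 - lam) ≤ 0 := by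
      have h1 : (0:ℝ) ≤ N + 1 := by positivity
      nlinarith
    rw [hlhs, lintegral_gammaPDF_of_nonpos hc]
    exact zero_le
  · -- main case
    have hNpos : (0:ℝ) < N := by
      have h4 : (0:ℝ) < 4 / lam ^ 2 := by positivity
      simp only [hNdef]; linarith
    have hN2 : (2:ℝ) ≤ N := by
      have h4 : (4:ℝ) ≤ 4 / lam ^ 2 := by
        rw [le_div_iff₀ (by positivity)]
        nlinarith
      linarith
    have hnl : 4 ≤ lam ^ 2 * (N - 1) := by
      have h4 : 4 / lam ^ 2 ≤ N - 1 := by linarith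
      rw [div_le_iff₀ (by positivity)] at h4
      linarith [h4]
    set k : ℝ := (N + 1) / N with hk
    have hkpos : 0 < k := by positivity
    have hk0 : k ≠ 0 := ne_of_gt hkpos
    set c0 : ℝ := N * (1 - lam) with hc0
    have hc1 : (N + 1) * (1 - lam) = k * c0 := by
      rw [hk, hc0]; field_simp
    have hmf : Measurable (gammaPDF ((N + 1) / 2) (1 / 2)) := by
      unfold gammaPDF
      exact (measurable_gammaPDFReal _ _).ennreal_ofReal
    have hrhs : chiSqMeasure n {x : ℝ | x ≤ c0}
        = ∫⁻ x in Iic c0, gammaPDF (N / 2) (1 / 2) x := by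
      rw [chiSqMeasure, gammaMeasure, ← hNdef,
        show {x : ℝ | x ≤ c0} = Iic c0 from rfl,
        withDensity_apply _ (measurableSet_Iic : MeasurableSet (Iic c0))]
    have hpre : (k * ·) ⁻¹' (Iio ((N + 1) * (1 - lam))) = Iio c0 := by
      ext z
      simp only [Set.mem_preimage, Set.mem_Iio, hc1]
      exact mul_lt_mul_iff_right₀ hkpos
    rw [hlhs, hrhs]
    calc ∫⁻ x in Iio ((N + 1) * (1 - lam)), gammaPDF ((N + 1) / 2) (1 / 2) x
        = ∫⁻ x in Iio ((N + 1) * (1 - lam)), gammaPDF ((N + 1) / 2) (1 / 2) x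
            ∂(ENNReal.ofReal |k| • Measure.map (k * ·) volume) := by
          rw [Real.smul_map_volume_mul_left hk0]
      _ = ENNReal.ofReal |k| * ∫⁻ x in Iio ((N + 1) * (1 - lam)),
            gammaPDF ((N + 1) / 2) (1 / 2) x ∂(Measure.map (k * ·) volume) := by
          rw [Measure.restrict_smul, lintegral_smul_measure, smul_eq_mul]
      _ = ENNReal.ofReal |k| * ∫⁻ y in Iio c0, gammaPDF ((N + 1) / 2) (1 / 2) (k * y) := by
          rw [setLIntegral_map measurableSet_Iio hmf (measurable_const_mul k), hpre]
      _ = ∫⁻ y in Iio c0, ENNReal.ofReal k * gammaPDF ((N + 1) / 2) (1 / 2) (k * y) := by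
          rw [abs_of_pos hkpos, ← lintegral_const_mul' _ _ ENNReal.ofReal_ne_top]
      _ ≤ ∫⁻ y in Iio c0, gammaPDF (N / 2) (1 / 2) y := by
          apply setLIntegral_mono' measurableSet_Iio
          intro y hy
          rw [Set.mem_Iio] at hy
          rcases lt_trichotomy y 0 with hneg | hzero | hpos
          · rw [gammaPDF_of_neg (by nlinarith : k * y < 0)]
            simp
          · subst hzero
            rw [mul_zero, gammaPDF_of_nonneg le_rfl,
              Real.zero_rpow (by nlinarith : (N + 1) / 2 - 1 ≠ 0)]
            simp
          · simp only [gammaPDF]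
            rw [← ENNReal.ofReal_mul hkpos.le]
            apply ENNReal.ofReal_le_ofReal
            rw [hk]
            exact aux_pdf_ineq hN2 hlam hl hnl hpos hy.le
      _ ≤ ∫⁻ y in Iic c0, gammaPDF (N / 2) (1 / 2) y :=
          lintegral_mono_set Iio_subset_Iic_self
end

section
/- For any integer $m \geq 1$ and real $t > 1$, if $\chi^2_m$ denotes a chi-square random variable with $m$ degrees of freedom, then $P\{\chi^2_m > m(1+\lambda)\} \leq \frac{1}{\lambda\sqrt{\pi m}} e^{-\frac{m}{2}(\lambda - \log(1+\lambda))}$ for every $\lambda > 0$. -/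
open Real MeasureTheory Set Filter Topology Stirling

namespace ChiSqAux


lemma log_one_add_ge {x : ℝ} (hx : 0 ≤ x) : x - x^2/2 ≤ Real.log (1+x) := by
  have hmono : MonotoneOn (fun y : ℝ => Real.log (1+y) - y + y^2/2) (Ici (0:ℝ)) := by
    have hderiv : ∀ y ∈ interior (Ici (0:ℝ)), HasDerivAt
        (fun y : ℝ => Real.log (1+y) - y + y^2/2) ((1+y)⁻¹ - 1 + y) y := by
      intro y hy
      rw [interior_Ici] at hy
      have h1 : (0:ℝ) < 1 + y := by simp at hy; linarith
      have hlog : HasDerivAt (fun y : ℝ => Real.log (1+y)) ((1+y)⁻¹) y := by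
        have := ((hasDerivAt_id y).const_add 1).log h1.ne'
        simpa using this
      have hsq : HasDerivAt (fun y : ℝ => y^2/2) y y := by
        have := ((hasDerivAt_pow 2 y).div_const 2)
        simpa using this
      exact (hlog.sub (hasDerivAt_id y)).add hsq
    apply monotoneOn_of_deriv_nonneg (convex_Ici 0)
    · apply ContinuousOn.add (ContinuousOn.sub ?_ (continuousOn_id)) (by fun_prop)
      apply ContinuousOn.log (by fun_prop)
      intro y hy
      simp only [mem_Ici] at hy
      positivity
    · intro y hy
      exact (hderiv y hy).differentiableAt.differentiableWithinAt
    · intro y hy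
      rw [(hderiv y hy).deriv]
      rw [interior_Ici] at hy
      simp only [mem_Ioi] at hy
      have h1 : (0:ℝ) < 1 + y := by linarith
      have : (1+y)⁻¹ - 1 + y = y^2/(1+y) := by field_simp; ring
      rw [this]; positivity
  have := hmono (self_mem_Ici) (mem_Ici.mpr hx) hx
  simp only [add_zero, Real.log_one] at this
  nlinarith [this]

lemma aux_scalar {y : ℝ} (hy : 2 ≤ y) : 1/2 + 1/(12*y) ≤ y * Real.log (1 + 1/(2*y-1)) := by
  have hd : (0:ℝ) < 2*y - 1 := by linarith
  have hx : (0:ℝ) ≤ 1/(2*y-1) := by positivity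
  have hlog := log_one_add_ge hx
  have hmid : 1/2 + 1/(12*y) ≤ y * (1/(2*y-1) - (1/(2*y-1))^2/2) := by
    have hkey : y * (1/(2*y-1) - (1/(2*y-1))^2/2) - (1/2 + 1/(12*y))
        = (4*y^2 - 4*y - 2) / (24*y*(2*y-1)^2) := by
      have hy0 : y ≠ 0 := by linarith
      generalize hdd : 2*y-1 = d at hd ⊢
      field_simp
      subst hdd
      ring
    have hnum : (0:ℝ) ≤ (4*y^2 - 4*y - 2) / (24*y*(2*y-1)^2) := by
      apply div_nonneg (by nlinarith) (by positivity)
    linarith [hkey ▸ hnum]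
  calc 1/2 + 1/(12*y) ≤ y * (1/(2*y-1) - (1/(2*y-1))^2/2) := hmid
    _ ≤ y * Real.log (1 + 1/(2*y-1)) :=
      mul_le_mul_of_nonneg_left hlog (by linarith)



lemma sqrt_pi_le_stirlingSeq (n : ℕ) : √π ≤ stirlingSeq (n+1) := by
  have ht : Tendsto (stirlingSeq ∘ Nat.succ) atTop (𝓝 (√π)) :=
    (Filter.tendsto_add_atTop_iff_nat 1).mpr tendsto_stirlingSeq_sqrt_pi
  exact Stirling.stirlingSeq'_antitone.le_of_tendsto ht n

lemma stirling_lower (n : ℕ) :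
    √π * (Real.sqrt (2*((n:ℝ)+1)) * (((n:ℝ)+1)/Real.exp 1)^(n+1)) ≤ (Nat.factorial (n+1) : ℝ) := by
  have h := sqrt_pi_le_stirlingSeq n
  rw [stirlingSeq] at h
  push_cast at h
  have hpos : (0:ℝ) < Real.sqrt (2*((n:ℝ)+1)) * (((n:ℝ)+1)/Real.exp 1)^(n+1) := by positivity
  rw [le_div_iff₀ hpos] at h
  push_cast
  linarith

lemma geo_id (N : ℝ) (hN : 0 < N) :
    (1/(2*N+1))^2 / (3*(1 - (1/(2*N+1))^2)) = 1/(12*N) - 1/(12*(N+1)) := by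
  have h1 : (2*N+1) ≠ 0 := by positivity
  have h2 : (1:ℝ) - (1/(2*N+1))^2 = (4*N*(N+1))/((2*N+1)^2) := by field_simp; ring
  rw [h2]
  field_simp
  ring

lemma stirling_step (n : ℕ) : Real.log (stirlingSeq (n+1)) - Real.log (stirlingSeq (n+2)) ≤
    1/(12*((n:ℝ)+1)) - 1/(12*(((n:ℝ)+1)+1)) := by
  set x : ℝ := ((1 : ℝ) / (2 * ((n:ℝ) + 1) + 1)) ^ 2 with hx
  have hx0 : (0:ℝ) ≤ x := sq_nonneg _
  have hx1 : x < 1 := by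
    rw [hx]
    have h1 : (1:ℝ) / (2 * ((n:ℝ) + 1) + 1) < 1 := by
      rw [div_lt_one (by positivity)]; have : (0:ℝ) ≤ (n:ℝ) := Nat.cast_nonneg n; linarith
    have h0 : (0:ℝ) ≤ (1:ℝ) / (2 * ((n:ℝ) + 1) + 1) := by positivity
    nlinarith
  have hsum' : HasSum (fun k : ℕ => (1:ℝ) / (2 * ((k:ℝ)+1) + 1) * x ^ (k+1))
      (Real.log (stirlingSeq (n+1)) - Real.log (stirlingSeq (n+2))) := by
    rw [hx]
    exact_mod_cast Stirling.log_stirlingSeq_diff_hasSum n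
  have g : HasSum (fun k : ℕ => (1/3 : ℝ) * x ^ (k+1)) (x / (3 * (1 - x))) := by
    have hne : (1:ℝ) - x ≠ 0 := by linarith
    have := (hasSum_geometric_of_lt_one hx0 hx1).mul_left (x/3)
    have heq : (fun k : ℕ => x/3 * x ^ k) = fun k : ℕ => (1/3 : ℝ) * x ^ (k+1) := by
      funext k; rw [pow_succ]; ring
    rw [heq] at this
    convert this using 1
    · rfl
    · rw [div_eq_mul_inv, mul_inv]; ring
  have hterm : ∀ k : ℕ, (1:ℝ) / (2 * ((k:ℝ)+1) + 1) * x ^ (k+1) ≤ (1/3 : ℝ) * x ^ (k+1) := by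
    intro k
    apply mul_le_mul_of_nonneg_right _ (pow_nonneg hx0 _)
    rw [div_le_div_iff₀ (by positivity) (by norm_num)]
    have : (0:ℝ) ≤ (k:ℝ) := Nat.cast_nonneg k
    linarith
  have hle := hasSum_le hterm hsum' g
  refine hle.trans (le_of_eq ?_)
  rw [hx]
  exact geo_id ((n:ℝ)+1) (by positivity)

lemma stirling_upper (n : ℕ) :
    stirlingSeq (n+1) ≤ √π * Real.exp (1/(12*((n:ℝ)+1))) := by
  set E : ℕ → ℝ := fun k => Real.log (stirlingSeq (k+1)) - 1/(12*((k:ℝ)+1)) with hE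
  have hmono : Monotone E := by
    apply monotone_nat_of_le_succ
    intro k
    have := stirling_step k
    simp only [hE]
    push_cast
    linarith
  have htend : Tendsto E atTop (𝓝 (Real.log (√π) - 0)) := by
    apply Tendsto.sub
    · exact (Real.continuousAt_log (Real.sqrt_pos.mpr Real.pi_pos).ne').tendsto.comp
        ((Filter.tendsto_add_atTop_iff_nat 1).mpr tendsto_stirlingSeq_sqrt_pi)
    · have h12 : Tendsto (fun k : ℕ => 12*((k:ℝ)+1)) atTop atTop := by
        apply Filter.Tendsto.const_mul_atTop (by norm_num : (0:ℝ) < 12)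
        exact tendsto_atTop_add_const_right _ _ tendsto_natCast_atTop_atTop
      have h0 : Tendsto (fun k : ℕ => (12*((k:ℝ)+1))⁻¹) atTop (𝓝 0) := h12.inv_tendsto_atTop
      simpa [one_div] using h0
  have hEn := hmono.ge_of_tendsto htend n
  have hlog : Real.log (stirlingSeq (n+1)) ≤ Real.log (√π) + 1/(12*((n:ℝ)+1)) := by
    simp only [hE] at hEn
    linarith
  have hpos := Stirling.stirlingSeq'_pos n
  calc stirlingSeq (n+1) = Real.exp (Real.log (stirlingSeq (n+1))) := (Real.exp_log hpos).symm
    _ ≤ Real.exp (Real.log (√π) + 1/(12*((n:ℝ)+1))) := Real.exp_le_exp.mpr hlog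
    _ = √π * Real.exp (1/(12*((n:ℝ)+1))) := by
        rw [Real.exp_add, Real.exp_log (Real.sqrt_pos.mpr Real.pi_pos)]



lemma Gamma_nat_add_half (k : ℕ) :
    Real.Gamma ((k:ℝ) + 1/2) = (Nat.factorial (2*k) : ℝ) * √π / (4^k * (Nat.factorial k : ℝ)) := by
  induction k with
  | zero =>
    rw [show ((0:ℕ):ℝ) + 1/2 = 1/2 by norm_num, Real.Gamma_one_half_eq]
    norm_num
  | succ k ih =>
    have hne : ((k:ℝ) + 1/2) ≠ 0 := by positivity
    have : ((k:ℝ) + 1 + 1/2) = ((k:ℝ) + 1/2) + 1 := by ring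
    rw [Nat.cast_add, Nat.cast_one, this, Real.Gamma_add_one hne, ih]
    have h2 : 2*(k+1) = (2*k+1)+1 := by ring
    rw [h2, Nat.factorial_succ, Nat.factorial_succ, Nat.factorial_succ]
    push_cast
    have h4 : ((4:ℝ)^(k+1)) = 4 * 4^k := by ring
    rw [pow_succ]
    have hk : ((Nat.factorial k : ℝ)) ≠ 0 := Nat.cast_ne_zero.mpr (Nat.factorial_ne_zero k)
    have h4k : ((4:ℝ)^k) ≠ 0 := by positivity
    field_simp
    ring

end ChiSqAux
section
open Real MeasureTheory Set Filter Topology Stirling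
namespace ChiSqAux

lemma stirling_lower_log (n : ℕ) (hn : 1 ≤ n) :
    (1/2)*Real.log π + (1/2)*(Real.log 2 + Real.log n) + n*(Real.log n - 1)
      ≤ Real.log (Nat.factorial n : ℝ) := by
  obtain ⟨j, rfl⟩ : ∃ j, n = j + 1 := ⟨n - 1, by omega⟩
  have hs := stirling_lower j
  have hN : (0:ℝ) < (j:ℝ) + 1 := by positivity
  have hLHS : (0:ℝ) < √π * (Real.sqrt (2*((j:ℝ)+1)) * (((j:ℝ)+1)/Real.exp 1)^(j+1)) := by
    positivity
  have hlog := Real.log_le_log hLHS hs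
  rw [Real.log_mul (by positivity) (by positivity),
    Real.log_mul (by positivity) (by positivity),
    Real.log_sqrt Real.pi_pos.le, Real.log_sqrt (by positivity),
    Real.log_pow, Real.log_div hN.ne' (Real.exp_ne_zero 1),
    Real.log_exp, Real.log_mul (by norm_num) hN.ne'] at hlog
  push_cast
  push_cast at hlog
  linarith

lemma stirling_upper_log (n : ℕ) (hn : 1 ≤ n) :
    Real.log (Nat.factorial n : ℝ) ≤
      (1/2)*Real.log π + 1/(12*(n:ℝ)) + (1/2)*(Real.log 2 + Real.log n) + n*(Real.log n - 1) := by
  obtain ⟨j, rfl⟩ : ∃ j, n = j + 1 := ⟨n - 1, by omega⟩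
  have hs := stirling_upper j
  rw [stirlingSeq] at hs
  have hN : (0:ℝ) < (j:ℝ) + 1 := by positivity
  have hden : (0:ℝ) < Real.sqrt (2*((j:ℝ)+1)) * (((j:ℝ)+1)/Real.exp 1)^(j+1) := by positivity
  rw [div_le_iff₀ (by push_cast; exact hden)] at hs
  have hfac : (0:ℝ) < (Nat.factorial (j+1) : ℝ) := by
    exact_mod_cast Nat.factorial_pos (j+1)
  have hRHS : (0:ℝ) < √π * Real.exp (1/(12*((j:ℝ)+1))) *
      (Real.sqrt (2*((j:ℝ)+1)) * (((j:ℝ)+1)/Real.exp 1)^(j+1)) := by positivity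
  have hlog : Real.log (Nat.factorial (j+1) : ℝ) ≤ Real.log (√π * Real.exp (1/(12*((j:ℝ)+1))) *
      (Real.sqrt (2*((j:ℝ)+1)) * (((j:ℝ)+1)/Real.exp 1)^(j+1))) := by
    apply Real.log_le_log hfac
    calc (Nat.factorial (j+1) : ℝ)
        ≤ √π * Real.exp (1/(12*((j:ℝ)+1))) * (√(2 * ((j:ℝ) + 1)) * (((j:ℝ) + 1) / rexp 1) ^ (j + 1)) := by
          push_cast at hs ⊢; linarith
      _ = _ := rfl
  rw [Real.log_mul (by positivity) (by positivity),
    Real.log_mul (by positivity) (Real.exp_ne_zero _),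
    Real.log_mul (by positivity) (by positivity),
    Real.log_sqrt Real.pi_pos.le, Real.log_sqrt (by positivity),
    Real.log_pow, Real.log_div hN.ne' (Real.exp_ne_zero 1),
    Real.log_exp, Real.log_exp, Real.log_mul (by norm_num) hN.ne'] at hlog
  push_cast
  push_cast at hlog
  linarith

lemma odd_core (Kr : ℝ) (hK2 : 2 ≤ Kr) (f2K fK : ℝ)
    (h1 : 1/2*Real.log π + 1/2*(Real.log 2 + Real.log (2*Kr)) + (2*Kr)*(Real.log (2*Kr) - 1) ≤ f2K)
    (h2 : fK ≤ 1/2*Real.log π + 1/(12*Kr) + 1/2*(Real.log 2 + Real.log Kr)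
      + Kr*(Real.log Kr - 1)) :
    1/2*(Real.log 2 + Real.log π + Real.log (Kr - 1/2)) + (Kr - 1/2)*(Real.log (Kr - 1/2) - 1)
      ≤ f2K + 1/2*Real.log π - (Kr*(2*Real.log 2) + fK) := by
  have hKpos : (0:ℝ) < Kr := by linarith
  have hupos : (0:ℝ) < Kr - 1/2 := by linarith
  have hlog2K : Real.log (2*Kr) = Real.log 2 + Real.log Kr := Real.log_mul two_ne_zero hKpos.ne'
  have hKu : Real.log Kr - Real.log (Kr - 1/2) = Real.log (1 + 1/(2*Kr-1)) := by
    rw [← Real.log_div hKpos.ne' hupos.ne']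
    congr 1
    have h2K1 : (2*Kr-1) ≠ 0 := by linarith
    rw [div_eq_iff hupos.ne', one_add_div h2K1, div_mul_eq_mul_div, eq_div_iff h2K1]
    ring
  have hsc := aux_scalar hK2
  rw [← hKu] at hsc
  nlinarith [hsc, h1, h2, hlog2K]

lemma key (m : ℕ) (hm : 2 ≤ m) :
    Real.sqrt (2*π*((m:ℝ)/2)) * (((m:ℝ)/2)/Real.exp 1) ^ ((m:ℝ)/2) ≤
      Real.Gamma ((m:ℝ)/2 + 1) := by
  rcases Nat.even_or_odd m with ⟨K, hK⟩ | ⟨j, hj⟩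
  · -- even case : m = 2K, K ≥ 1
    obtain ⟨i, rfl⟩ : ∃ i, K = i + 1 := ⟨K - 1, by omega⟩
    subst hK
    have hcast : ((i+1+(i+1):ℕ):ℝ)/2 = ((i:ℝ)+1) := by push_cast; ring
    rw [hcast]
    have hG : Real.Gamma (((i:ℝ)+1) + 1) = (Nat.factorial (i+1) : ℝ) := by
      have := Real.Gamma_nat_eq_factorial (i+1)
      push_cast at this ⊢
      exact this
    rw [hG]
    have hrpow : (((i:ℝ)+1)/Real.exp 1) ^ (((i:ℝ)+1)) =
        (((i:ℝ)+1)/Real.exp 1) ^ (i+1 : ℕ) := by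
      rw [show ((i:ℝ)+1) = ((i+1 : ℕ):ℝ) by push_cast; ring, Real.rpow_natCast]
    rw [hrpow, show 2*π*((i:ℝ)+1) = π * (2*((i:ℝ)+1)) by ring,
      Real.sqrt_mul Real.pi_pos.le, mul_assoc]
    exact stirling_lower i
  · -- odd case : m = 2j+1, j ≥ 1
    obtain ⟨i, rfl⟩ : ∃ i, j = i + 1 := ⟨j - 1, by omega⟩
    subst hj
    obtain ⟨K, hKdef⟩ : ∃ K : ℕ, K = i + 2 := ⟨i+2, rfl⟩
    have hK2 : (2:ℝ) ≤ (K:ℝ) := by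
      subst hKdef; push_cast; linarith [Nat.cast_nonneg (α := ℝ) i]
    have hKpos : (0:ℝ) < (K:ℝ) := by linarith
    set u : ℝ := ((2*(i+1)+1 : ℕ):ℝ)/2 with hudef
    have hu : u = (K:ℝ) - 1/2 := by subst hKdef; rw [hudef]; push_cast; ring
    have hupos : (0:ℝ) < u := by rw [hu]; linarith
    have hG : Real.Gamma (u + 1) =
        (Nat.factorial (2*K) : ℝ) * √π / (4^K * (Nat.factorial K : ℝ)) := by
      rw [show u + 1 = (K:ℝ) + 1/2 by rw [hu]; ring]
      exact Gamma_nat_add_half K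
    rw [hG]
    have hA : (0:ℝ) < Real.sqrt (2*π*u) * (u/Real.exp 1) ^ u := by
      have := Real.rpow_pos_of_pos (div_pos hupos (Real.exp_pos 1)) u
      positivity
    have h2K : (0:ℝ) < (Nat.factorial (2*K) : ℝ) := by exact_mod_cast Nat.factorial_pos _
    have hKf : (0:ℝ) < (Nat.factorial K : ℝ) := by exact_mod_cast Nat.factorial_pos _
    have hB : (0:ℝ) < (Nat.factorial (2*K) : ℝ) * √π / (4^K * (Nat.factorial K : ℝ)) := by
      positivity
    rw [← Real.exp_log hA, ← Real.exp_log hB]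
    apply Real.exp_le_exp.mpr
    have hlogA : Real.log (Real.sqrt (2*π*u) * (u/Real.exp 1) ^ u) =
        1/2*(Real.log 2 + Real.log π + Real.log u) + u * (Real.log u - 1) := by
      rw [Real.log_mul (by positivity)
          (Real.rpow_pos_of_pos (div_pos hupos (Real.exp_pos 1)) u).ne',
        Real.log_sqrt (by positivity), Real.log_rpow (div_pos hupos (Real.exp_pos 1)),
        Real.log_div hupos.ne' (Real.exp_ne_zero 1), Real.log_exp,
        Real.log_mul (by positivity) hupos.ne', Real.log_mul (by norm_num) Real.pi_pos.ne']
      ring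
    have hlogB : Real.log ((Nat.factorial (2*K) : ℝ) * √π / (4^K * (Nat.factorial K : ℝ))) =
        Real.log (Nat.factorial (2*K) : ℝ) + 1/2*Real.log π
          - ((K:ℝ) * (2*Real.log 2) + Real.log (Nat.factorial K : ℝ)) := by
      rw [Real.log_div (by positivity) (by positivity),
        Real.log_mul h2K.ne' (by positivity),
        Real.log_mul (by positivity) hKf.ne',
        Real.log_sqrt Real.pi_pos.le, Real.log_pow,
        show (4:ℝ) = 2^2 by norm_num, Real.log_pow]
      push_cast
      ring
    rw [hlogA, hlogB, hu]
    have h1 := stirling_lower_log (2*K) (by omega)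
    have h2 := stirling_upper_log K (by omega)
    push_cast at h1 h2
    exact odd_core (K:ℝ) hK2 _ _ h1 h2

end ChiSqAux
end
section
open Real MeasureTheory Set Filter Topology
namespace ChiSqAux

lemma exp_integral_Ioi (a C β : ℝ) (hβ : 0 < β) (hC : 0 ≤ C) :
    ∫⁻ x in Ioi a, ENNReal.ofReal (C * Real.exp (-(β * x))) =
      ENNReal.ofReal (C / β * Real.exp (-(β * a))) := by
  have hint : IntegrableOn (fun x : ℝ => C * Real.exp (-(β * x))) (Ioi a) := by
    have := (exp_neg_integrableOn_Ioi a hβ).const_mul C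
    simp only [neg_mul] at this
    exact this
  rw [← MeasureTheory.ofReal_integral_eq_lintegral_ofReal hint
    (ae_of_all _ (fun x => by positivity))]
  congr 1
  rw [MeasureTheory.integral_const_mul]
  have hcomp : ∫ x in Ioi a, Real.exp (-(β * x)) = β⁻¹ * Real.exp (-(β * a)) := by
    have := MeasureTheory.integral_comp_mul_left_Ioi (fun y => Real.exp (-y)) a hβ
    simp only [smul_eq_mul] at this
    rw [this, integral_exp_neg_Ioi]
  rw [hcomp]
  field_simp

lemma tail_le (u a C β : ℝ) (hβ : 0 < β) (hC : 0 ≤ C)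
    (hpt : ∀ x ∈ Ioi a, ProbabilityTheory.gammaPDFReal u (1/2) x ≤ C * Real.exp (-(β * x))) :
    ∫⁻ x in Ioi a, ProbabilityTheory.gammaPDF u (1/2) x ≤
      ENNReal.ofReal (C / β * Real.exp (-(β * a))) := by
  rw [← exp_integral_Ioi a C β hβ hC]
  apply setLIntegral_mono
  · have : Measurable (fun x : ℝ => C * Real.exp (-(β * x))) := by fun_prop
    exact this.ennreal_ofReal
  · intro x hx
    exact ENNReal.ofReal_le_ofReal (hpt x hx)

end ChiSqAux
end
section
open Real MeasureTheory Set Filter Topology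
namespace ChiSqAux

lemma pt_one (a : ℝ) (ha : 0 < a) (x : ℝ) (hx : x ∈ Ioi a) :
    ProbabilityTheory.gammaPDFReal (1/2) (1/2) x ≤
      ((1/2:ℝ)^((1:ℝ)/2) / Real.Gamma (1/2) * a^((1:ℝ)/2-1)) * Real.exp (-((1/2:ℝ) * x)) := by
  have hxa : (0:ℝ) < x := ha.trans hx
  rw [ProbabilityTheory.gammaPDFReal, if_pos hxa.le]
  have hΓ : (0:ℝ) < Real.Gamma (1/2) := Real.Gamma_pos_of_pos (by norm_num)
  have hcoef : (0:ℝ) ≤ (1/2:ℝ)^((1:ℝ)/2) / Real.Gamma (1/2) :=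
    div_nonneg (Real.rpow_nonneg (by norm_num) _) hΓ.le
  apply mul_le_mul_of_nonneg_right _ (Real.exp_pos _).le
  exact mul_le_mul_of_nonneg_left
    (Real.rpow_le_rpow_of_nonpos ha hx.le (by norm_num)) hcoef

lemma pt_ge2 (u a : ℝ) (hu : 1 ≤ u) (ha : 0 < a) (x : ℝ) (hx : x ∈ Ioi a) :
    ProbabilityTheory.gammaPDFReal u (1/2) x ≤
      ((1/2:ℝ)^u / Real.Gamma u * a^(u-1) * Real.exp (-(u-1))) *
        Real.exp (-((1/2 - (u-1)/a) * x)) := by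
  have hxa : (0:ℝ) < x := ha.trans hx
  have hu0 : (0:ℝ) < u := by linarith
  rw [ProbabilityTheory.gammaPDFReal, if_pos hxa.le]
  have hΓ : (0:ℝ) < Real.Gamma u := Real.Gamma_pos_of_pos hu0
  have hcoef : (0:ℝ) ≤ (1/2:ℝ)^u / Real.Gamma u :=
    div_nonneg (Real.rpow_nonneg (by norm_num) _) hΓ.le
  have h1 : x^(u-1) * Real.exp (-(1/2 * x)) ≤
      a^(u-1) * Real.exp (-(u-1)) * Real.exp (-((1/2 - (u-1)/a) * x)) := by
    rw [Real.rpow_def_of_pos hxa, Real.rpow_def_of_pos ha,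
      ← Real.exp_add, ← Real.exp_add, ← Real.exp_add]
    apply Real.exp_le_exp.mpr
    have hlog : Real.log x - Real.log a ≤ x/a - 1 := by
      rw [← Real.log_div hxa.ne' ha.ne']
      exact Real.log_le_sub_one_of_pos (by positivity)
    have h2 := mul_le_mul_of_nonneg_left hlog (by linarith : (0:ℝ) ≤ u - 1)
    have expand : (1/2 - (u-1)/a)*x = x/2 - (u-1)*(x/a) := by ring
    rw [expand]
    linarith [h2]
  calc (1/2:ℝ)^u / Real.Gamma u * x^(u-1) * Real.exp (-(1/2 * x))
      = ((1/2:ℝ)^u / Real.Gamma u) * (x^(u-1) * Real.exp (-(1/2 * x))) := by ring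
    _ ≤ ((1/2:ℝ)^u / Real.Gamma u) *
        (a^(u-1) * Real.exp (-(u-1)) * Real.exp (-((1/2 - (u-1)/a) * x))) :=
      mul_le_mul_of_nonneg_left h1 hcoef
    _ = _ := by ring

lemma final_one (lam : ℝ) (hlam : 0 < lam) :
    ((1/2:ℝ)^((1:ℝ)/2) / Real.Gamma (1/2) * (1+lam)^((1:ℝ)/2-1)) / (1/2) *
      Real.exp (-((1/2:ℝ) * (1+lam))) ≤
      1/(lam * Real.sqrt π) * Real.exp (-(1/2:ℝ)*(lam - Real.log (1+lam))) := by
  have h1l : (0:ℝ) < 1 + lam := by linarith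
  have hπ : (0:ℝ) < Real.sqrt π := Real.sqrt_pos.mpr Real.pi_pos
  set s : ℝ := (1+lam)^((1:ℝ)/2) with hsdef
  set t : ℝ := (1+lam)^((1:ℝ)/2-1) with htdef
  have hs : 0 < s := Real.rpow_pos_of_pos h1l _
  have ht : 0 < t := Real.rpow_pos_of_pos h1l _
  have hts : t * (1+lam) = s := by
    rw [htdef, hsdef]
    nth_rewrite 2 [show (1+lam) = (1+lam)^(1:ℝ) by rw [Real.rpow_one]]
    rw [← Real.rpow_add h1l]
    norm_num
  set c : ℝ := (1/2:ℝ)^((1:ℝ)/2) with hcdef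
  have hc : c = (Real.sqrt 2)⁻¹ := by
    rw [hcdef, ← Real.sqrt_eq_rpow, show (1/2:ℝ) = 2⁻¹ by norm_num, Real.sqrt_inv]
  have h2c : 2 * c = Real.sqrt 2 := by
    rw [hc, mul_inv_eq_iff_eq_mul₀ (by positivity : √(2:ℝ) ≠ 0)]
    exact (Real.mul_self_sqrt (by norm_num : (0:ℝ) ≤ 2)).symm
  have h2e : (2:ℝ) ≤ Real.exp 1 := by nlinarith [Real.exp_one_gt_d9]
  have key1 : Real.sqrt 2 * Real.exp (-(1/2:ℝ)) ≤ 1 := by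
    rw [show -(1/2:ℝ) = (-1)/2 by norm_num, Real.exp_half,
      ← Real.sqrt_mul (by norm_num : (0:ℝ) ≤ 2)]
    have hle : (2:ℝ) * Real.exp (-1) ≤ 1 := by
      rw [Real.exp_neg, mul_inv_le_iff₀ (Real.exp_pos 1)]
      linarith
    calc √(2 * Real.exp (-1)) ≤ √1 := Real.sqrt_le_sqrt hle
      _ = 1 := Real.sqrt_one
  have e3 : Real.exp (-(1/2:ℝ)*(lam - Real.log (1+lam))) = Real.exp (-(lam/2)) * s := by
    rw [hsdef, Real.rpow_def_of_pos h1l, ← Real.exp_add]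
    congr 1
    ring
  have e2 : Real.exp (-((1/2:ℝ) * (1+lam))) = Real.exp (-(1/2:ℝ)) * Real.exp (-(lam/2)) := by
    rw [← Real.exp_add]
    congr 1
    ring
  rw [e2, e3, Real.Gamma_one_half_eq]
  rw [one_div_mul_eq_div, le_div_iff₀ (by positivity)]
  have hexpand : c / √π * t / (1/2) * (Real.exp (-(1/2:ℝ)) * Real.exp (-(lam/2))) * (lam * √π)
      = (2*c*Real.exp (-(1/2:ℝ))) * (t * lam) * Real.exp (-(lam/2)) := by
    field_simp
  rw [hexpand]
  have step1 : (2*c*Real.exp (-(1/2:ℝ))) * (t * lam) ≤ s := by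
    have ha1 : (2*c*Real.exp (-(1/2:ℝ))) ≤ 1 := by rw [h2c]; exact key1
    have ha2 : t * lam ≤ s := by
      calc t * lam ≤ t * (1+lam) := by nlinarith
        _ = s := hts
    calc (2*c*Real.exp (-(1/2:ℝ))) * (t * lam) ≤ 1 * (t * lam) := by
          apply mul_le_mul_of_nonneg_right ha1 (by positivity)
      _ = t * lam := by ring
      _ ≤ s := ha2
  calc (2*c*Real.exp (-(1/2:ℝ))) * (t * lam) * Real.exp (-(lam/2))
      ≤ s * Real.exp (-(lam/2)) :=
        mul_le_mul_of_nonneg_right step1 (Real.exp_pos _).le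
    _ = Real.exp (-(lam/2)) * s := by ring

lemma final_ge2 (u lam a : ℝ) (hu : 1 ≤ u) (hlam : 0 < lam) (haeq : a = 2*u*(1+lam))
    (hkey : Real.sqrt (2*π*u) * (u/Real.exp 1)^u ≤ Real.Gamma (u+1)) :
    ((1/2:ℝ)^u / Real.Gamma u * a^(u-1) * Real.exp (-(u-1))) / (1/2 - (u-1)/a) *
      Real.exp (-((1/2 - (u-1)/a) * a)) ≤
      1/(lam * Real.sqrt (2*π*u)) * Real.exp (-u*(lam - Real.log (1+lam))) := by
  have hu0 : (0:ℝ) < u := by linarith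
  have h1l : (0:ℝ) < 1 + lam := by linarith
  have ha : (0:ℝ) < a := by rw [haeq]; positivity
  have hΓ : (0:ℝ) < Real.Gamma u := Real.Gamma_pos_of_pos hu0
  have hd : (0:ℝ) < u*lam + 1 := by positivity
  have hβeq : 1/2 - (u-1)/a = (u*lam+1)/a := by
    rw [haeq, eq_div_iff (by positivity : (0:ℝ) < 2*u*(1+lam)).ne']
    field_simp
    ring
  rw [hβeq, div_mul_cancel₀ _ ha.ne', div_div_eq_mul_div]
  -- LHS is now C * a / (u*lam+1) * exp (-(u*lam+1))
  have e4 : (u/Real.exp 1)^u = u^u * Real.exp (-u) := by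
    rw [Real.div_rpow hu0.le (Real.exp_pos 1).le, Real.exp_one_rpow, Real.exp_neg,
      div_eq_mul_inv]
  have key' : lam * (Real.sqrt (2*π*u) * (u^u * Real.exp (-u))) ≤
      Real.Gamma u * (u*lam+1) := by
    have h5 := hkey
    rw [e4, Real.Gamma_add_one hu0.ne'] at h5
    nlinarith [hΓ, mul_le_mul_of_nonneg_left h5 hlam.le]
  have hP : (0:ℝ) < (1+lam)^u := Real.rpow_pos_of_pos h1l u
  have hE : (0:ℝ) < Real.exp (-(u*lam)) := Real.exp_pos _
  have hsq : (0:ℝ) < Real.sqrt (2*π*u) := Real.sqrt_pos.mpr (by positivity)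
  have hau : a^(u-1) * a = a^u := by
    rw [← Real.rpow_add_one ha.ne' (u-1)]
    norm_num
  have hexp : Real.exp (-(u-1)) * Real.exp (-(u*lam+1)) =
      Real.exp (-u) * Real.exp (-(u*lam)) := by
    rw [← Real.exp_add, ← Real.exp_add]
    congr 1
    ring
  have e1 : (1/2:ℝ)^u * a^u = u^u * (1+lam)^u := by
    rw [haeq, ← Real.mul_rpow (by norm_num) (by positivity : (0:ℝ) ≤ 2*u*(1+lam)),
      show (1/2:ℝ)*(2*u*(1+lam)) = u*(1+lam) by ring, Real.mul_rpow hu0.le h1l.le]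
  have e3 : Real.exp (-u*(lam - Real.log (1+lam))) = Real.exp (-(u*lam)) * (1+lam)^u := by
    rw [Real.rpow_def_of_pos h1l, ← Real.exp_add]
    congr 1
    ring
  have lhseq : ((1/2:ℝ)^u / Real.Gamma u * a^(u-1) * Real.exp (-(u-1))) * a / (u*lam+1) *
      Real.exp (-(u*lam+1))
      = (u^u * (1+lam)^u) * (Real.exp (-u) * Real.exp (-(u*lam))) /
        (Real.Gamma u * (u*lam+1)) := by
    rw [← e1, ← hau, ← hexp]
    field_simp
  rw [lhseq, e3, one_div_mul_eq_div, div_le_div_iff₀ (by positivity) (by positivity)]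
  have S2 := mul_le_mul_of_nonneg_left key' (mul_pos hP hE).le
  nlinarith [S2]

end ChiSqAux
end

open Real MeasureTheory Set ChiSqAux

theorem chiSq_right_tail_bound (m : ℕ) (hm : 1 ≤ m) (t : ℝ) (ht : 1 < t)
    (lam : ℝ) (hlam : 0 < lam) :
    chiSqMeasure m {x : ℝ | m * (1 + lam) < x} ≤
      ENNReal.ofReal (1 / (lam * Real.sqrt (Real.pi * m)) *
        Real.exp (-(m / 2 : ℝ) * (lam - Real.log (1 + lam)))) := by
  have hm1 : (1:ℝ) ≤ (m:ℝ) := by exact_mod_cast hm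
  have hlam1 : (0:ℝ) < 1 + lam := by linarith
  have hmeas : chiSqMeasure m {x : ℝ | (m:ℝ) * (1+lam) < x}
      = ∫⁻ x in Ioi ((m:ℝ)*(1+lam)), ProbabilityTheory.gammaPDF ((m:ℝ)/2) (1/2) x := by
    rw [chiSqMeasure, ProbabilityTheory.gammaMeasure,
      show {x : ℝ | (m:ℝ)*(1+lam) < x} = Ioi ((m:ℝ)*(1+lam)) from rfl,
      withDensity_apply _ (measurableSet_Ioi : MeasurableSet (Ioi ((m:ℝ)*(1+lam))))]
  rw [hmeas]
  rcases eq_or_lt_of_le hm with h1 | h2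
  · -- m = 1
    have hm1' : m = 1 := h1.symm
    subst hm1'
    have hc1 : ((1:ℕ):ℝ) = (1:ℝ) := Nat.cast_one
    rw [hc1, one_mul, mul_one]
    have ha : (0:ℝ) < 1 + lam := hlam1
    refine le_trans (tail_le (1/2) (1+lam)
        ((1/2:ℝ)^((1:ℝ)/2) / Real.Gamma (1/2) * (1+lam)^((1:ℝ)/2-1)) (1/2)
        one_half_pos ?_ ?_) (ENNReal.ofReal_le_ofReal ?_)
    · have hΓ : (0:ℝ) < Real.Gamma (1/2) := Real.Gamma_pos_of_pos (by norm_num)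
      exact mul_nonneg (div_nonneg (Real.rpow_nonneg (by norm_num) _) hΓ.le)
        (Real.rpow_nonneg ha.le _)
    · exact pt_one (1+lam) ha
    · exact final_one lam hlam
  · -- 2 ≤ m
    have hm2 : 2 ≤ m := h2
    have hm2r : (2:ℝ) ≤ (m:ℝ) := by exact_mod_cast hm2
    set u : ℝ := (m:ℝ)/2 with hudef
    set a : ℝ := (m:ℝ)*(1+lam) with hadef
    have hu1 : (1:ℝ) ≤ u := by rw [hudef]; linarith
    have hu0 : (0:ℝ) < u := by linarith
    have ha : (0:ℝ) < a := by rw [hadef]; positivity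
    have haeq : a = 2*u*(1+lam) := by rw [hadef, hudef]; ring
    have hβ : (0:ℝ) < 1/2 - (u-1)/a := by
      have h3 : (u-1)/a < 1/2 := by
        rw [div_lt_iff₀ ha, haeq]
        nlinarith
      linarith
    have hΓ : (0:ℝ) < Real.Gamma u := Real.Gamma_pos_of_pos hu0
    have hC : (0:ℝ) ≤ (1/2:ℝ)^u / Real.Gamma u * a^(u-1) * Real.exp (-(u-1)) :=
      mul_nonneg (mul_nonneg (div_nonneg (Real.rpow_nonneg (by norm_num) _) hΓ.le)
        (Real.rpow_nonneg ha.le _)) (Real.exp_pos _).le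
    have hkey := key m hm2
    rw [← hudef] at hkey
    have hπm : π * (m:ℝ) = 2*π*u := by rw [hudef]; ring
    rw [hπm]
    exact le_trans (tail_le u a _ _ hβ hC (pt_ge2 u a hu1 ha))
      (ENNReal.ofReal_le_ofReal (final_ge2 u lam a hu1 hlam haeq hkey))
end
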